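/- arXiv:2406.07984 — 2 statements merged into one kernel-verified Lean document; each statement's English description precedes it below -/
import Mathlib

section
/- For every R > 0 and every r > 0, ∫_{ℝ²} min(|ξ|² r², 4)/(|ξ|²(1 + R²|ξ|²)) dξ ≤ C ln(2 + r/R) for an absolute constant C. -/
open MeasureTheory Set Filter Topology

private lemma kernel_aux_integrable (R a : ℝ) (hR : 0 < R) (ha : 0 < a) :
    IntegrableOn (fun y : ℝ => 1 / (y * (1 + R ^ 2 * y ^ 2))) (Ioi a) := by
  have hcont : ContinuousOn (fun y : ℝ => 1 / (y * (1 + R ^ 2 * y ^ 2))) (Ioi a) := by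
    apply ContinuousOn.div continuousOn_const (by fun_prop)
    intro y hy
    have : 0 < y := ha.trans hy
    positivity
  refine Integrable.mono' ((integrableOn_Ioi_rpow_of_lt (show (-3:ℝ) < -1 by norm_num)
    ha).const_mul (R⁻¹ ^ 2)) (hcont.aestronglyMeasurable measurableSet_Ioi) ?_
  filter_upwards [ae_restrict_mem measurableSet_Ioi] with y hy
  have hy0 : 0 < y := ha.trans hy
  rw [Real.norm_eq_abs, abs_of_nonneg (by positivity)]
  rw [Real.rpow_neg hy0.le, show (3:ℝ) = ((3:ℕ):ℝ) by norm_num, Real.rpow_natCast]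
  have h3 : 1 / (y * (1 + R ^ 2 * y ^ 2)) ≤ 1 / (R ^ 2 * y ^ 3) :=
    one_div_le_one_div_of_le (by positivity) (by nlinarith [sq_nonneg y])
  calc 1 / (y * (1 + R ^ 2 * y ^ 2)) ≤ 1 / (R ^ 2 * y ^ 3) := h3
    _ = R⁻¹ ^ 2 * (y ^ 3)⁻¹ := by field_simp

private lemma kernel_aux_ftc (R a : ℝ) (hR : 0 < R) (ha : 0 < a) :
    ∫ y in Ioi a, 1 / (y * (1 + R ^ 2 * y ^ 2))
      = -Real.log R - (Real.log a - Real.log (1 + R ^ 2 * a ^ 2) / 2) := by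
  set F : ℝ → ℝ := fun y => Real.log y - Real.log (1 + R ^ 2 * y ^ 2) / 2 with hF
  have hderiv : ∀ y ∈ Ici a, HasDerivAt F (1 / (y * (1 + R ^ 2 * y ^ 2))) y := by
    intro y hy
    have hy0 : 0 < y := lt_of_lt_of_le ha hy
    have hD : (0:ℝ) < 1 + R ^ 2 * y ^ 2 := by positivity
    have h1 : HasDerivAt (fun y : ℝ => 1 + R ^ 2 * y ^ 2) (R ^ 2 * (2 * y)) y := by
      simpa using ((hasDerivAt_pow 2 y).const_mul (R ^ 2)).const_add 1
    have h2 : HasDerivAt (fun y : ℝ => Real.log (1 + R ^ 2 * y ^ 2))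
        (R ^ 2 * (2 * y) / (1 + R ^ 2 * y ^ 2)) y := h1.log hD.ne'
    have h3 : HasDerivAt (fun y : ℝ => Real.log y - Real.log (1 + R ^ 2 * y ^ 2) / 2)
        (y⁻¹ - R ^ 2 * (2 * y) / (1 + R ^ 2 * y ^ 2) / 2) y := (Real.hasDerivAt_log hy0.ne').sub (h2.div_const 2)
    convert h3 using 1
    field_simp
    ring
  have htends : Tendsto F atTop (𝓝 (-Real.log R)) := by
    have h1 : Tendsto (fun y : ℝ => (y ^ 2)⁻¹ + R ^ 2) atTop (𝓝 (0 + R ^ 2)) :=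
      ((tendsto_pow_atTop (by norm_num)).inv_tendsto_atTop).add tendsto_const_nhds
    have h2 : Tendsto (fun y : ℝ => -(Real.log ((y ^ 2)⁻¹ + R ^ 2)) / 2) atTop
        (𝓝 (-(Real.log (0 + R ^ 2)) / 2)) :=
      (((Real.continuousAt_log (by positivity)).tendsto.comp h1).neg).div_const 2
    have h3 : -(Real.log ((0:ℝ) + R ^ 2)) / 2 = -Real.log R := by
      rw [zero_add, Real.log_pow]
      push_cast
      ring
    rw [h3] at h2
    refine h2.congr' ?_
    filter_upwards [eventually_gt_atTop (0:ℝ)] with y hy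
    have h4 : (y ^ 2)⁻¹ + R ^ 2 = (1 + R ^ 2 * y ^ 2) / y ^ 2 := by field_simp
    rw [h4, Real.log_div (by positivity) (by positivity), Real.log_pow, hF]
    push_cast
    ring
  rw [integral_Ioi_of_hasDerivAt_of_tendsto' hderiv (kernel_aux_integrable R a hR ha) htends]

private lemma kernel_oneD (r R : ℝ) (hr : 0 < r) (hR : 0 < R) :
    ∫ y in Ioi (0:ℝ), y * (min (y ^ 2 * r ^ 2) 4 / (y ^ 2 * (1 + R ^ 2 * y ^ 2)))
      ≤ 5 * Real.log (2 + r / R) := by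
  set a : ℝ := r⁻¹ with haDef
  have ha : 0 < a := by positivity
  set g : ℝ → ℝ := fun y => y * (min (y ^ 2 * r ^ 2) 4 / (y ^ 2 * (1 + R ^ 2 * y ^ 2)))
    with hg
  have hx : 0 < r / R := by positivity
  have hgmeas : Measurable g := by
    apply Measurable.mul measurable_id
    exact (((by fun_prop : Measurable fun y : ℝ => y ^ 2 * r ^ 2)).min
      measurable_const).div (by fun_prop)
  have hgnonneg : ∀ y ∈ Ioi (0:ℝ), 0 ≤ g y := by
    intro y hy
    have hy0 : (0:ℝ) < y := hy
    have hmin : (0:ℝ) ≤ min (y ^ 2 * r ^ 2) 4 := le_min (by positivity) (by norm_num)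
    have : (0:ℝ) < y ^ 2 * (1 + R ^ 2 * y ^ 2) := by positivity
    exact mul_nonneg hy0.le (div_nonneg hmin this.le)
  have hbound1 : ∀ y ∈ Ioc (0:ℝ) a, g y ≤ r ^ 2 * y := by
    intro y hy
    have hy0 : 0 < y := hy.1
    have h1 : min (y ^ 2 * r ^ 2) 4 / (y ^ 2 * (1 + R ^ 2 * y ^ 2))
        ≤ y ^ 2 * r ^ 2 / (y ^ 2 * 1) := by
      apply div_le_div₀ (by positivity) (min_le_left _ _) (by positivity)
      nlinarith [sq_nonneg (R * y), sq_nonneg y]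
    have h2 : y ^ 2 * r ^ 2 / (y ^ 2 * 1) = r ^ 2 := by field_simp
    rw [h2] at h1
    calc g y ≤ y * r ^ 2 := mul_le_mul_of_nonneg_left h1 hy0.le
      _ = r ^ 2 * y := mul_comm _ _
  have hbound2 : ∀ y ∈ Ioi a, g y ≤ 4 * (1 / (y * (1 + R ^ 2 * y ^ 2))) := by
    intro y hy
    have hy0 : 0 < y := ha.trans hy
    have hD : (0:ℝ) < y ^ 2 * (1 + R ^ 2 * y ^ 2) := by positivity
    have h1 : min (y ^ 2 * r ^ 2) 4 / (y ^ 2 * (1 + R ^ 2 * y ^ 2))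
        ≤ 4 / (y ^ 2 * (1 + R ^ 2 * y ^ 2)) :=
      (div_le_div_iff_of_pos_right hD).mpr (min_le_right _ _)
    have h2 : y * (4 / (y ^ 2 * (1 + R ^ 2 * y ^ 2))) = 4 * (1 / (y * (1 + R ^ 2 * y ^ 2))) := by
      field_simp
    calc g y ≤ y * (4 / (y ^ 2 * (1 + R ^ 2 * y ^ 2))) := mul_le_mul_of_nonneg_left h1 hy0.le
      _ = _ := h2
  -- integrability on the two pieces
  have hInt2 : IntegrableOn g (Ioi a) := by
    refine Integrable.mono' ((kernel_aux_integrable R a hR ha).const_mul 4)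
      (hgmeas.aestronglyMeasurable.restrict) ?_
    filter_upwards [ae_restrict_mem measurableSet_Ioi] with y hy
    rw [Real.norm_eq_abs, abs_of_nonneg (hgnonneg y (ha.trans hy))]
    exact hbound2 y hy
  have hInt1 : IntegrableOn g (Ioc 0 a) := by
    refine Integrable.mono' (g := fun _ : ℝ => r)
      ((integrableOn_const_iff).mpr (Or.inr measure_Ioc_lt_top))
      (hgmeas.aestronglyMeasurable.restrict) ?_
    filter_upwards [ae_restrict_mem measurableSet_Ioc] with y hy
    rw [Real.norm_eq_abs, abs_of_nonneg (hgnonneg y hy.1)]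
    calc g y ≤ r ^ 2 * y := hbound1 y hy
      _ ≤ r ^ 2 * a := by nlinarith [hy.2, sq_nonneg r]
      _ = r := by rw [haDef]; field_simp
  -- split the integral
  have hsplit : Ioc (0:ℝ) a ∪ Ioi a = Ioi 0 := Ioc_union_Ioi_eq_Ioi ha.le
  rw [← hsplit, setIntegral_union (Ioc_disjoint_Ioi le_rfl) measurableSet_Ioi hInt1 hInt2]
  -- first piece
  have hp1 : ∫ y in Ioc (0:ℝ) a, g y ≤ 1 / 2 := by
    have hib : IntegrableOn (fun y : ℝ => r ^ 2 * y) (Ioc 0 a) :=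
      (continuous_const.mul continuous_id).integrableOn_Ioc
    have h1 := setIntegral_mono_on hInt1 hib measurableSet_Ioc hbound1
    have h2 : ∫ y in Ioc (0:ℝ) a, r ^ 2 * y = 1 / 2 := by
      rw [← intervalIntegral.integral_of_le ha.le, intervalIntegral.integral_const_mul,
        integral_id, haDef]
      field_simp
      ring
    linarith
  -- second piece
  have hp2 : ∫ y in Ioi a, g y ≤ 4 * Real.log (2 + r / R) := by
    have h1 := setIntegral_mono_on hInt2 ((kernel_aux_integrable R a hR ha).const_mul 4)
      measurableSet_Ioi hbound2
    have h2 : ∫ y in Ioi a, 4 * (1 / (y * (1 + R ^ 2 * y ^ 2)))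
        = 4 * (-Real.log R - (Real.log a - Real.log (1 + R ^ 2 * a ^ 2) / 2)) := by
      rw [integral_const_mul, kernel_aux_ftc R a hR ha]
    have hV : -Real.log R - (Real.log a - Real.log (1 + R ^ 2 * a ^ 2) / 2)
        ≤ Real.log (2 + r / R) := by
      have e0 : Real.log a = -Real.log r := by rw [haDef, Real.log_inv]
      have e1 : (1:ℝ) + (r / R) ^ 2 = (r / R) ^ 2 * (1 + R ^ 2 * a ^ 2) := by
        rw [haDef]
        field_simp
        ring
      have e2 : Real.log (1 + (r / R) ^ 2)
          = 2 * (Real.log r - Real.log R) + Real.log (1 + R ^ 2 * a ^ 2) := by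
        rw [e1, Real.log_mul (by positivity) (by positivity), Real.log_pow,
          Real.log_div hr.ne' hR.ne']
        push_cast
        ring
      have e3 : -Real.log R - (Real.log a - Real.log (1 + R ^ 2 * a ^ 2) / 2)
          = Real.log (1 + (r / R) ^ 2) / 2 := by
        rw [e2, e0]
        ring
      rw [e3]
      have h4 : Real.log (1 + (r / R) ^ 2) ≤ 2 * Real.log (2 + r / R) := by
        have h5 : (1:ℝ) + (r / R) ^ 2 ≤ (2 + r / R) ^ 2 := by nlinarith [hx.le]
        calc Real.log (1 + (r / R) ^ 2) ≤ Real.log ((2 + r / R) ^ 2) :=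
              Real.log_le_log (by positivity) h5
          _ = 2 * Real.log (2 + r / R) := by rw [Real.log_pow]; push_cast; ring
      linarith
    nlinarith [h1, h2, hV]
  have hl2 : (1/2:ℝ) ≤ Real.log (2 + r / R) := by
    have h6 : Real.log 2 ≤ Real.log (2 + r / R) := Real.log_le_log (by norm_num) (by linarith)
    have := Real.log_two_gt_d9
    linarith
  linarith

/-- Kernel estimate: `∫_{ℝ²} min(|ξ|²r², 4)/(|ξ|²(1 + R²|ξ|²)) dξ ≤ C ln(2 + r/R)`
for an absolute constant `C`. -/
theorem kernel_log_estimate :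
    ∃ C > 0, ∀ r R : ℝ, 0 < r → 0 < R →
      (∫ ξ : EuclideanSpace ℝ (Fin 2),
          min (‖ξ‖ ^ 2 * r ^ 2) 4 / (‖ξ‖ ^ 2 * (1 + R ^ 2 * ‖ξ‖ ^ 2)))
        ≤ C * Real.log (2 + r / R) := by
  set V : ℝ := (volume (Metric.ball (0 : EuclideanSpace ℝ (Fin 2)) 1)).toReal with hVdef
  have hVpos : 0 < V :=
    ENNReal.toReal_pos (Metric.measure_ball_pos volume 0 one_pos).ne' measure_ball_lt_top.ne
  refine ⟨10 * V, by positivity, fun r R hr hR => ?_⟩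
  have key := integral_fun_norm_addHaar (volume : Measure (EuclideanSpace ℝ (Fin 2)))
    (fun s : ℝ => min (s ^ 2 * r ^ 2) 4 / (s ^ 2 * (1 + R ^ 2 * s ^ 2)))
  have hdim : Module.finrank ℝ (EuclideanSpace ℝ (Fin 2)) = 2 := finrank_euclideanSpace_fin
  rw [hdim] at key
  have hlog : 0 < Real.log (2 + r / R) := by
    apply Real.log_pos
    have : 0 < r / R := by positivity
    linarith
  have h1 : (∫ ξ : EuclideanSpace ℝ (Fin 2),
      min (‖ξ‖ ^ 2 * r ^ 2) 4 / (‖ξ‖ ^ 2 * (1 + R ^ 2 * ‖ξ‖ ^ 2)))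
      = 2 * (V * ∫ y in Ioi (0:ℝ), y * (min (y ^ 2 * r ^ 2) 4 / (y ^ 2 * (1 + R ^ 2 * y ^ 2)))) := by
    rw [key]
    simp only [smul_eq_mul, nsmul_eq_mul, pow_one, Nat.cast_ofNat]
    norm_num
    exact Or.inl rfl
  rw [h1]
  have h2 := kernel_oneD r R hr hR
  calc 2 * (V * ∫ y in Ioi (0:ℝ), y * (min (y ^ 2 * r ^ 2) 4 / (y ^ 2 * (1 + R ^ 2 * y ^ 2))))
      ≤ 2 * (V * (5 * Real.log (2 + r / R))) := by
        apply mul_le_mul_of_nonneg_left (mul_le_mul_of_nonneg_left h2 hVpos.le) (by norm_num)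
    _ = 10 * V * Real.log (2 + r / R) := by ring
end

section
/- Let f ∈ Ḣ¹(ℝ²) and for R > 0 let f_{(R)} denote the average of f over the ball B_R. Then there is an absolute constant C such that |f_{(R)} − f_{(1)}| ≤ C‖∇f‖_{L²(ℝ²)} (ln R)^{1/2} for all R ≥ 2. -/
open MeasureTheory

open Metric Set

local notation "E2" => EuclideanSpace ℝ (Fin 2)


lemma finrank_E2 : Module.finrank ℝ E2 = 2 := by simp [finrank_euclideanSpace]

lemma vol_unit_ball : volume (ball (0:E2) 1) = ENNReal.ofReal Real.pi := by
  rw [EuclideanSpace.volume_ball]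
  norm_num [Real.sq_sqrt Real.pi_pos.le, Real.Gamma_two]

lemma vol_unit_ball_toReal : (volume (ball (0:E2) 1)).toReal = Real.pi := by
  rw [vol_unit_ball, ENNReal.toReal_ofReal Real.pi_pos.le]

lemma lintegral_comp_smul' (g : E2 → ENNReal) (hg : Measurable g) {t : ℝ} (ht : 0 < t) :
    ∫⁻ x, g (t • x) = ENNReal.ofReal ((t ^ 2)⁻¹) * ∫⁻ x, g x := by
  have h1 : ∫⁻ x, g (t • x) = ∫⁻ y, g y ∂(volume.map (t • ·)) :=
    (lintegral_map hg (measurable_const_smul t)).symm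
  rw [h1, Measure.map_addHaar_smul volume ht.ne', lintegral_smul_measure, finrank_E2,
    abs_of_nonneg (by positivity), smul_eq_mul]


lemma ftc_bound (f : E2 → ℝ) (hf : Differentiable ℝ f) {R : ℝ} (hR : 1 ≤ R)
    (y : E2) (hy : ‖y‖ ≤ 1) :
    ENNReal.ofReal ‖f (R • y) - f y‖ ≤
      ∫⁻ t in Icc (1:ℝ) R, ENNReal.ofReal ‖fderiv ℝ f (t • y)‖ := by
  set u : ℝ → ℝ := fun t => fderiv ℝ f (t • y) y with hu
  have humeas : Measurable u := by
    have h1 : Measurable fun t : ℝ => fderiv ℝ f (t • y) :=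
      (measurable_fderiv ℝ f).comp (measurable_id.smul_const y)
    exact (ContinuousLinearMap.apply ℝ ℝ y).continuous.measurable.comp h1
  have hders : ∀ t : ℝ, HasDerivAt (fun s => f (s • y)) (u t) t := by
    intro t
    have h1 : HasDerivAt (fun s : ℝ => s • y) y t := by
      simpa using (hasDerivAt_id t).smul_const y
    exact ((hf (t • y)).hasFDerivAt).comp_hasDerivAt t h1
  have hmono : ∫⁻ t in Ioc (1:ℝ) R, (‖u t‖₊ : ENNReal) ≤
      ∫⁻ t in Icc (1:ℝ) R, ENNReal.ofReal ‖fderiv ℝ f (t • y)‖ := by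
    refine le_trans (lintegral_mono fun t => ?_) (lintegral_mono_set Ioc_subset_Icc_self)
    rw [← enorm_eq_nnnorm, ← ofReal_norm]
    apply ENNReal.ofReal_le_ofReal
    calc ‖u t‖ ≤ ‖fderiv ℝ f (t • y)‖ * ‖y‖ := ContinuousLinearMap.le_opNorm _ y
      _ ≤ ‖fderiv ℝ f (t • y)‖ * 1 := by
          exact mul_le_mul_of_nonneg_left hy (norm_nonneg _)
      _ = _ := mul_one _
  by_cases hint : IntervalIntegrable u volume 1 R
  · have heq : ∫ t in (1:ℝ)..R, u t = f (R • y) - f y := by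
      simpa using intervalIntegral.integral_eq_sub_of_hasDerivAt (fun t _ => hders t) hint
    rw [← heq, intervalIntegral.integral_of_le hR, ofReal_norm]
    exact le_trans (enorm_integral_le_lintegral_enorm _) hmono
  · refine le_trans le_top (le_of_eq ?_)
    symm
    rw [eq_top_iff]
    refine le_trans (le_of_eq ?_) hmono
    rw [intervalIntegrable_iff_integrableOn_Ioc_of_le hR] at hint
    have : ¬ HasFiniteIntegral u (volume.restrict (Ioc 1 R)) := fun h =>
      hint ⟨(humeas.aestronglyMeasurable), h⟩
    simpa [HasFiniteIntegral, not_lt, top_le_iff, eq_comm, enorm_eq_nnnorm] using this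

lemma indic_smul {β : Type*} [Zero β] (f : E2 → β) {t : ℝ} (ht : 0 < t) (y : E2) :
    (ball (0:E2) 1).indicator (fun y => f (t • y)) y =
      (ball (0:E2) t).indicator f (t • y) := by
  have hmem : t • y ∈ ball (0:E2) t ↔ y ∈ ball (0:E2) 1 := by
    simp only [mem_ball_zero_iff, norm_smul, Real.norm_eq_abs, abs_of_pos ht]
    constructor
    · intro h; nlinarith [norm_nonneg y]
    · intro h; nlinarith [norm_nonneg y]
  by_cases hy : y ∈ ball (0:E2) 1
  · rw [indicator_of_mem hy, indicator_of_mem (hmem.2 hy)]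
  · rw [indicator_of_notMem hy, indicator_of_notMem (fun h => hy (hmem.1 h))]

lemma int_comp (f : E2 → ℝ) (hloc : LocallyIntegrable f volume) {t : ℝ} (ht : 0 < t) :
    IntegrableOn (fun y => f (t • y)) (ball (0:E2) 1) := by
  have h1 : IntegrableOn f (ball (0:E2) t) :=
    (hloc.integrableOn_isCompact (isCompact_closedBall 0 t)).mono_set ball_subset_closedBall
  have h2 : Integrable ((ball (0:E2) t).indicator f) :=
    (integrable_indicator_iff measurableSet_ball).2 h1
  have h3 := (integrable_comp_smul_iff volume ((ball (0:E2) t).indicator f) ht.ne').2 h2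
  apply (integrable_indicator_iff (measurableSet_ball : MeasurableSet (ball (0:E2) 1))).mp
  have : (ball (0:E2) 1).indicator (fun y => f (t • y)) =
      fun y => (ball (0:E2) t).indicator f (t • y) := funext (indic_smul f ht)
  rw [this]; exact h3

lemma avg_eq (f : E2 → ℝ) {t : ℝ} (ht : 0 < t) :
    ⨍ y in ball (0:E2) t, f y = Real.pi⁻¹ * ∫ y in ball (0:E2) 1, f (t • y) := by
  have hvol : (volume (ball (0:E2) t)).toReal = t ^ 2 * Real.pi := by
    rw [Measure.addHaar_ball_of_pos volume 0 ht, finrank_E2, vol_unit_ball,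
      ← ENNReal.ofReal_mul (by positivity), ENNReal.toReal_ofReal (by positivity)]
  have hsub : ∫ y in ball (0:E2) 1, f (t • y) = (t ^ 2)⁻¹ • ∫ x in ball (0:E2) t, f x := by
    rw [Measure.setIntegral_comp_smul_of_pos volume f (ball (0:E2) 1) ht, finrank_E2,
      smul_unitBall_of_pos ht]
  rw [setAverage_eq, measureReal_def, hvol, hsub]
  simp [smul_eq_mul]
  ring

-- kernel weight
noncomputable def Wt (R : ℝ) (x : E2) : ENNReal :=
  ∫⁻ t in Icc (1:ℝ) R, (if ‖x‖ < t then ENNReal.ofReal ((t ^ 2)⁻¹) else 0)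

lemma lint_inv_sq {a R : ℝ} (ha : 1 ≤ a) :
    ∫⁻ t in Icc a R, ENNReal.ofReal ((t ^ 2)⁻¹) ≤ ENNReal.ofReal a⁻¹ := by
  rcases le_or_gt a R with hle | hlt
  · have hcont : ContinuousOn (fun t : ℝ => (t ^ 2)⁻¹) (Icc a R) := by
      apply ContinuousOn.inv₀ (by fun_prop)
      intro t ht
      have : (1:ℝ) ≤ t := le_trans ha ht.1
      positivity
    have hint : IntegrableOn (fun t : ℝ => (t ^ 2)⁻¹) (Icc a R) :=
      hcont.integrableOn_compact isCompact_Icc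
    rw [← ofReal_integral_eq_lintegral_ofReal hint ?nn]
    case nn =>
      filter_upwards [ae_restrict_mem measurableSet_Icc] with t ht
      have : (1:ℝ) ≤ t := le_trans ha ht.1
      positivity
    apply ENNReal.ofReal_le_ofReal
    have hivi : ∀ t ∈ Icc a R, HasDerivAt (fun s : ℝ => -s⁻¹) ((t ^ 2)⁻¹) t := by
      intro t ht
      have ht0 : t ≠ 0 := by have := le_trans ha ht.1; positivity
      have h := (hasDerivAt_inv ht0).neg
      simp only [neg_neg] at h
      exact h
    have := intervalIntegral.integral_eq_sub_of_hasDerivAt (a := a) (b := R) (f := fun s : ℝ => -s⁻¹)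
      (f' := fun t : ℝ => (t ^ 2)⁻¹) ?hd ?hi
    case hd => intro t ht; exact hivi t (by rwa [uIcc_of_le hle] at ht)
    case hi =>
      apply ContinuousOn.intervalIntegrable
      rwa [uIcc_of_le hle]
    rw [MeasureTheory.integral_Icc_eq_integral_Ioc, ← intervalIntegral.integral_of_le hle, this]
    have hR : (0:ℝ) < R := lt_of_lt_of_le (lt_of_lt_of_le one_pos ha) hle
    have : (0:ℝ) ≤ R⁻¹ := by positivity
    linarith
  · rw [Icc_eq_empty (not_le.mpr hlt)]
    simp

lemma Wt_le {R : ℝ} (hR : 1 ≤ R) (x : E2) :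
    Wt R x ≤ (ball (0:E2) R).indicator (fun x => ENNReal.ofReal ((max 1 ‖x‖)⁻¹)) x := by
  have hW : Wt R x = ∫⁻ t in Ioi ‖x‖ ∩ Icc 1 R, ENNReal.ofReal ((t ^ 2)⁻¹) := by
    rw [Wt]
    have : ∀ t : ℝ, (if ‖x‖ < t then ENNReal.ofReal ((t ^ 2)⁻¹) else 0) =
        (Ioi ‖x‖).indicator (fun t => ENNReal.ofReal ((t ^ 2)⁻¹)) t := by
      intro t; by_cases h : ‖x‖ < t <;> simp [h, indicator, mem_Ioi]
    simp_rw [this]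
    rw [lintegral_indicator measurableSet_Ioi, Measure.restrict_restrict measurableSet_Ioi]
  by_cases hmem : x ∈ ball (0:E2) R
  · rw [indicator_of_mem hmem, hW]
    calc ∫⁻ t in Ioi ‖x‖ ∩ Icc 1 R, ENNReal.ofReal ((t ^ 2)⁻¹)
        ≤ ∫⁻ t in Icc (max 1 ‖x‖) R, ENNReal.ofReal ((t ^ 2)⁻¹) := by
          apply lintegral_mono_set
          rintro t ⟨ht1, ht2, ht3⟩
          exact ⟨max_le ht2 (le_of_lt ht1), ht3⟩
      _ ≤ ENNReal.ofReal ((max 1 ‖x‖)⁻¹) := lint_inv_sq (le_max_left _ _)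
  · rw [indicator_of_notMem hmem, hW]
    have hxR : R ≤ ‖x‖ := by simpa [mem_ball_zero_iff, not_lt] using hmem
    have : Ioi ‖x‖ ∩ Icc 1 R = ∅ := by
      ext t; simp only [mem_inter_iff, mem_Ioi, mem_Icc, mem_empty_iff_false, iff_false]
      rintro ⟨h1, _, h3⟩; linarith
    simp [this]

lemma radial_int {R : ℝ} (hR : 2 ≤ R) :
    ∫ y in Ioi (0:ℝ), y ^ 1 • (if y < R then ((max 1 y)⁻¹) ^ 2 else 0) =
      1 / 2 + Real.log R := by
  have hR1 : (1:ℝ) ≤ R := by linarith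
  set ψ : ℝ → ℝ := fun y => y * ((max 1 y)⁻¹) ^ 2 with hψ
  have hψc : Continuous ψ := by
    apply continuous_id.mul (Continuous.pow ?_ 2)
    apply Continuous.inv₀ (continuous_const.max continuous_id)
    intro y; have := le_max_left 1 y; positivity
  have h1 : ∫ y in Ioi (0:ℝ), y ^ 1 • (if y < R then ((max 1 y)⁻¹) ^ 2 else 0) =
      ∫ y in Ioi (0:ℝ), (Ioo (0:ℝ) R).indicator ψ y := by
    apply setIntegral_congr_fun measurableSet_Ioi
    intro y hy
    simp only [mem_Ioi] at hy
    by_cases h : y < R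
    · rw [indicator_of_mem (by exact ⟨hy, h⟩)]
      simp only [ψ, if_pos h, pow_one, smul_eq_mul]
    · rw [indicator_of_notMem (by simp [mem_Ioo]; intro _; linarith)]
      simp only [if_neg h, smul_eq_mul, mul_zero, pow_one, smul_zero]
  rw [h1, setIntegral_indicator measurableSet_Ioo,
    (by rw [inter_eq_right]; exact Ioo_subset_Ioi_self : Ioi (0:ℝ) ∩ Ioo 0 R = Ioo 0 R),
    ← integral_Ioc_eq_integral_Ioo, ← intervalIntegral.integral_of_le (by linarith)]
  have hsplit := intervalIntegral.integral_add_adjacent_intervals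
    (a := (0:ℝ)) (b := 1) (c := R) (μ := volume)
    (hψc.intervalIntegrable _ _) (hψc.intervalIntegrable _ _)
  rw [← hsplit]
  have h01 : ∫ y in (0:ℝ)..1, ψ y = 1 / 2 := by
    rw [intervalIntegral.integral_congr (g := fun y => y) ?_]
    · rw [integral_id]; norm_num
    · intro y hy
      rw [uIcc_of_le (by norm_num)] at hy
      have : max 1 y = 1 := max_eq_left hy.2
      simp [ψ, this]
  have h1R : ∫ y in (1:ℝ)..R, ψ y = Real.log R := by
    rw [intervalIntegral.integral_congr (g := fun y => y⁻¹) ?_]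
    · rw [integral_inv (by rw [uIcc_of_le hR1]; intro h; exact absurd h.1 (by norm_num))]
      simp
    · intro y hy
      rw [uIcc_of_le hR1] at hy
      have hy1 : (1:ℝ) ≤ y := hy.1
      have : max 1 y = y := max_eq_right hy1
      rw [hψ]
      field_simp [this]
      rw [this]
  rw [h01, h1R]

lemma lint_Wb_sq {R : ℝ} (hR : 2 ≤ R) :
    ∫⁻ x, ((ball (0:E2) R).indicator (fun x => ENNReal.ofReal ((max 1 ‖x‖)⁻¹)) x) ^ 2
      ≤ ENNReal.ofReal (Real.pi * (1 + 2 * Real.log R)) := by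
  set φ : E2 → ℝ := fun x => ((max 1 ‖x‖)⁻¹) ^ 2 with hφ
  have hφc : Continuous φ := by
    apply Continuous.pow ?_ 2
    apply Continuous.inv₀ (continuous_const.max continuous_norm)
    intro x; have := le_max_left 1 ‖x‖; positivity
  have hsq : ∀ x : E2, ((ball (0:E2) R).indicator
      (fun x => ENNReal.ofReal ((max 1 ‖x‖)⁻¹)) x) ^ 2 =
      (ball (0:E2) R).indicator (fun x => ENNReal.ofReal (φ x)) x := by
    intro x
    by_cases h : x ∈ ball (0:E2) R
    · rw [indicator_of_mem h, indicator_of_mem h, hφ,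
        ← ENNReal.ofReal_pow (by positivity)]
    · simp [indicator_of_notMem h]
  simp_rw [hsq]
  rw [lintegral_indicator measurableSet_ball]
  have hint : IntegrableOn φ (ball (0:E2) R) :=
    (hφc.continuousOn.integrableOn_compact (isCompact_closedBall 0 R)).mono_set
      ball_subset_closedBall
  rw [← ofReal_integral_eq_lintegral_ofReal hint ?nn]
  case nn =>
    filter_upwards with x
    have := le_max_left 1 ‖x‖; positivity
  apply ENNReal.ofReal_le_ofReal
  set F : ℝ → ℝ := fun r => if r < R then ((max 1 r)⁻¹) ^ 2 else 0 with hF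
  have hval : ∫ x in ball (0:E2) R, φ x = ∫ x : E2, F ‖x‖ := by
    rw [← integral_indicator measurableSet_ball]
    congr 1; ext x
    by_cases h : x ∈ ball (0:E2) R
    · rw [indicator_of_mem h]
      rw [mem_ball_zero_iff] at h
      simp only [hφ, hF, if_pos h]
    · rw [indicator_of_notMem h]
      rw [mem_ball_zero_iff, not_lt] at h
      simp only [hF, if_neg (not_lt.mpr h)]
  rw [hval, integral_fun_norm_addHaar (volume : Measure E2) F, finrank_E2]
  have hv : (volume (ball (0:E2) 1)).toReal = Real.pi := by
    rw [vol_unit_ball, ENNReal.toReal_ofReal Real.pi_pos.le]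
  rw [measureReal_def, hv]
  have := radial_int hR
  simp only [hF]
  rw [(by norm_num : 2 - 1 = 1), this]
  rw [smul_eq_mul, nsmul_eq_mul]
  push_cast
  ring_nf
  linarith [Real.log_nonneg (by linarith : (1:ℝ) ≤ R)]

lemma main_lint (f : E2 → ℝ) (hdiff : Differentiable ℝ f)
    (hf2 : Integrable (fun x => ‖fderiv ℝ f x‖ ^ 2)) {R : ℝ} (hR : 2 ≤ R) :
    ∫⁻ y in ball (0:E2) 1, ENNReal.ofReal ‖f (R • y) - f y‖ ≤
      ENNReal.ofReal (Real.sqrt (∫ x, ‖fderiv ℝ f x‖ ^ 2) *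
        Real.sqrt (Real.pi * (1 + 2 * Real.log R))) := by
  have hR1 : (1:ℝ) ≤ R := by linarith
  set g : E2 → ENNReal := fun x => ENNReal.ofReal ‖fderiv ℝ f x‖ with hg
  have hgmeas : Measurable g := (measurable_fderiv ℝ f).norm.ennreal_ofReal
  set k : ℝ → E2 → ENNReal :=
    fun t x => (if ‖x‖ < t then ENNReal.ofReal ((t ^ 2)⁻¹) else 0) * g x with hk
  have hkmeas : Measurable (Function.uncurry k) := by
    apply Measurable.mul
    · exact Measurable.ite (measurableSet_lt (measurable_snd.norm) measurable_fst)
        (((measurable_fst.pow_const 2).inv).ennreal_ofReal) measurable_const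
    · exact hgmeas.comp measurable_snd
  -- step 1 : FTC bound
  have step1 : ∫⁻ y in ball (0:E2) 1, ENNReal.ofReal ‖f (R • y) - f y‖ ≤
      ∫⁻ y in ball (0:E2) 1, ∫⁻ t in Icc (1:ℝ) R, g (t • y) := by
    apply lintegral_mono_ae
    filter_upwards [ae_restrict_mem measurableSet_ball] with y hy
    exact ftc_bound f hdiff hR1 y (le_of_lt (mem_ball_zero_iff.1 hy))
  -- step 2 : swap
  have step2 : ∫⁻ y in ball (0:E2) 1, ∫⁻ t in Icc (1:ℝ) R, g (t • y) =
      ∫⁻ t in Icc (1:ℝ) R, ∫⁻ y in ball (0:E2) 1, g (t • y) := by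
    apply lintegral_lintegral_swap
    exact (hgmeas.comp (continuous_snd.smul continuous_fst).measurable).aemeasurable
  -- step 3 : scaling
  have step3 : ∫⁻ t in Icc (1:ℝ) R, ∫⁻ y in ball (0:E2) 1, g (t • y) =
      ∫⁻ t in Icc (1:ℝ) R, ∫⁻ x, k t x := by
    apply setLIntegral_congr_fun measurableSet_Icc
    intro t ht
    have ht0 : (0:ℝ) < t := lt_of_lt_of_le one_pos ht.1
    have heq1 : ∫⁻ y in ball (0:E2) 1, g (t • y) =
        ENNReal.ofReal ((t ^ 2)⁻¹) * ∫⁻ x in ball (0:E2) t, g x := by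
      calc ∫⁻ y in ball (0:E2) 1, g (t • y)
          = ∫⁻ y, (ball (0:E2) 1).indicator (fun y => g (t • y)) y :=
            (lintegral_indicator measurableSet_ball _).symm
        _ = ∫⁻ y, ((ball (0:E2) t).indicator g) (t • y) := by
            simp_rw [indic_smul g ht0]
        _ = ENNReal.ofReal ((t ^ 2)⁻¹) * ∫⁻ x, (ball (0:E2) t).indicator g x :=
            lintegral_comp_smul' _ (hgmeas.indicator measurableSet_ball) ht0
        _ = _ := by rw [lintegral_indicator measurableSet_ball]
    beta_reduce
    rw [heq1]
    have heq2 : ∀ x : E2, k t x =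
        (ball (0:E2) t).indicator (fun x => ENNReal.ofReal ((t ^ 2)⁻¹) * g x) x := by
      intro x
      by_cases h : ‖x‖ < t <;>
        simp [hk, indicator, mem_ball_zero_iff, h]
    simp_rw [heq2]
    rw [lintegral_indicator measurableSet_ball, lintegral_const_mul _ hgmeas]
  -- step 4 : swap back
  have step4 : ∫⁻ t in Icc (1:ℝ) R, ∫⁻ x, k t x = ∫⁻ x, ∫⁻ t in Icc (1:ℝ) R, k t x := by
    exact lintegral_lintegral_swap hkmeas.aemeasurable
  -- step 5 : inner integral
  have step5 : ∀ x : E2, ∫⁻ t in Icc (1:ℝ) R, k t x = g x * Wt R x := by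
    intro x
    show ∫⁻ t in Icc (1:ℝ) R, (if ‖x‖ < t then ENNReal.ofReal ((t ^ 2)⁻¹) else 0) * g x
      = g x * Wt R x
    rw [Wt]
    refine (lintegral_mul_const _ ?_).trans (mul_comm _ _)
    exact Measurable.ite (measurableSet_lt measurable_const measurable_id)
      (by fun_prop) measurable_const
  -- step 6 : Hölder
  have hWmeas : Measurable (Wt R) := by
    have : Measurable (Function.uncurry fun (x : E2) (t : ℝ) =>
        (if ‖x‖ < t then ENNReal.ofReal ((t ^ 2)⁻¹) else 0)) := by
      exact Measurable.ite (measurableSet_lt (measurable_fst.norm) measurable_snd)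
        (((measurable_snd.pow_const 2).inv).ennreal_ofReal) measurable_const
    exact this.lintegral_prod_right'
  have step6 : ∫⁻ x, g x * Wt R x ≤
      (∫⁻ x, g x ^ (2:ℝ)) ^ (1/2:ℝ) * (∫⁻ x, Wt R x ^ (2:ℝ)) ^ (1/2:ℝ) :=
    ENNReal.lintegral_mul_le_Lp_mul_Lq volume ⟨by norm_num, by norm_num, by norm_num⟩
      hgmeas.aemeasurable hWmeas.aemeasurable
  -- identify the two factors
  have hrp : ∀ z : ENNReal, z ^ (2:ℝ) = z ^ (2:ℕ) := fun z => by
    rw [← ENNReal.rpow_natCast]; norm_num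
  have hg2 : ∫⁻ x, g x ^ (2:ℝ) = ENNReal.ofReal (∫ x, ‖fderiv ℝ f x‖ ^ 2) := by
    simp_rw [hrp, hg, ← ENNReal.ofReal_pow (norm_nonneg _)]
    rw [← ofReal_integral_eq_lintegral_ofReal hf2]
    filter_upwards with x; positivity
  have hW2 : ∫⁻ x, Wt R x ^ (2:ℝ) ≤ ENNReal.ofReal (Real.pi * (1 + 2 * Real.log R)) := by
    simp_rw [hrp]
    refine le_trans (lintegral_mono fun x => pow_le_pow_left₀ zero_le' (Wt_le hR1 x) 2)
      (lint_Wb_sq hR)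
  calc ∫⁻ y in ball (0:E2) 1, ENNReal.ofReal ‖f (R • y) - f y‖
      ≤ ∫⁻ x, g x * Wt R x := by
        rw [← funext step5, ← step4, ← step3, ← step2]; exact step1
    _ ≤ (∫⁻ x, g x ^ (2:ℝ)) ^ (1/2:ℝ) * (∫⁻ x, Wt R x ^ (2:ℝ)) ^ (1/2:ℝ) := step6
    _ ≤ ENNReal.ofReal (∫ x, ‖fderiv ℝ f x‖ ^ 2) ^ (1/2:ℝ) *
        ENNReal.ofReal (Real.pi * (1 + 2 * Real.log R)) ^ (1/2:ℝ) := by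
        rw [hg2]
        exact mul_le_mul_right (ENNReal.rpow_le_rpow hW2 (by norm_num)) _
    _ = _ := by
        have hlog : 0 ≤ Real.log R := Real.log_nonneg hR1
        rw [ENNReal.ofReal_rpow_of_nonneg (integral_nonneg fun x => by positivity)
            (by norm_num), ENNReal.ofReal_rpow_of_nonneg (by positivity) (by norm_num),
          ← ENNReal.ofReal_mul (by positivity)]
        rw [Real.sqrt_eq_rpow, Real.sqrt_eq_rpow]


/-- Logarithmic drift of ball averages of an `Ḣ¹(ℝ²)` function:
`|f_{(R)} − f_{(1)}| ≤ C ‖∇f‖_{L²} (ln R)^{1/2}` for all `R ≥ 2`. -/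
theorem average_log_drift :
    ∃ C > 0, ∀ f : EuclideanSpace ℝ (Fin 2) → ℝ,
      Differentiable ℝ f →
      LocallyIntegrable f volume →
      Integrable (fun x => ‖fderiv ℝ f x‖ ^ 2) →
      ∀ R : ℝ, 2 ≤ R →
        |(⨍ y in Metric.ball (0 : EuclideanSpace ℝ (Fin 2)) R, f y)
            - ⨍ y in Metric.ball (0 : EuclideanSpace ℝ (Fin 2)) 1, f y|
          ≤ C * Real.sqrt (∫ x, ‖fderiv ℝ f x‖ ^ 2) * Real.sqrt (Real.log R) := by
  refine ⟨2, by norm_num, ?_⟩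
  intro f hdiff hloc hf2 R hR
  have hR1 : (1:ℝ) ≤ R := by linarith
  have hRpos : (0:ℝ) < R := by linarith
  set D2 := ∫ x, ‖fderiv ℝ f x‖ ^ 2 with hD2def
  have hD2 : 0 ≤ D2 := integral_nonneg fun x => by positivity
  have hint1 : IntegrableOn (fun y => f (R • y)) (ball (0:E2) 1) volume :=
    int_comp f hloc hRpos
  have hint2 : IntegrableOn f (ball (0:E2) 1) volume := by
    have := int_comp f hloc one_pos
    simpa [one_smul] using this
  have havg : (⨍ y in ball (0:E2) R, f y) - (⨍ y in ball (0:E2) 1, f y)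
      = Real.pi⁻¹ * ∫ y in ball (0:E2) 1, (f (R • y) - f y) := by
    rw [avg_eq f hRpos, avg_eq f one_pos]
    simp only [one_smul]
    rw [← mul_sub, ← integral_sub hint1 hint2]
  rw [havg, abs_mul, abs_of_nonneg (inv_nonneg.mpr Real.pi_pos.le)]
  set L := ∫⁻ y in ball (0:E2) 1, ENNReal.ofReal ‖f (R • y) - f y‖ with hL
  set P := Real.pi * (1 + 2 * Real.log R) with hPdef
  have hlogR : (0.6931471803 : ℝ) < Real.log R :=
    lt_of_lt_of_le Real.log_two_gt_d9 (Real.log_le_log two_pos hR)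
  have hPnn : 0 ≤ Real.sqrt D2 * Real.sqrt P := by positivity
  have habs : |∫ y in ball (0:E2) 1, (f (R • y) - f y)| ≤ L.toReal := by
    rw [← Real.norm_eq_abs]
    exact norm_integral_le_lintegral_norm _
  have hLle : L.toReal ≤ Real.sqrt D2 * Real.sqrt P :=
    ENNReal.toReal_le_of_le_ofReal hPnn (main_lint f hdiff hf2 hR)
  have hsqrtP : Real.sqrt P ≤ 2 * Real.pi * Real.sqrt (Real.log R) := by
    have h1 : P ≤ (2 * Real.pi) ^ 2 * Real.log R := by
      rw [hPdef]
      have hlr : (0:ℝ) < Real.log R := by linarith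
      have h2 : 1 + 2 * Real.log R ≤ 4 * Real.pi * Real.log R := by
        nlinarith [mul_nonneg (by nlinarith [Real.pi_gt_three] : (0:ℝ) ≤ Real.pi - 3) hlr.le,
          hlogR]
      calc Real.pi * (1 + 2 * Real.log R) ≤ Real.pi * (4 * Real.pi * Real.log R) :=
            mul_le_mul_of_nonneg_left h2 Real.pi_pos.le
        _ = (2 * Real.pi) ^ 2 * Real.log R := by ring
    calc Real.sqrt P ≤ Real.sqrt ((2 * Real.pi) ^ 2 * Real.log R) := Real.sqrt_le_sqrt h1
      _ = 2 * Real.pi * Real.sqrt (Real.log R) := by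
          rw [Real.sqrt_mul (by positivity), Real.sqrt_sq (by positivity)]
  calc Real.pi⁻¹ * |∫ y in ball (0:E2) 1, (f (R • y) - f y)|
      ≤ Real.pi⁻¹ * (Real.sqrt D2 * Real.sqrt P) := by
        apply mul_le_mul_of_nonneg_left (le_trans habs hLle)
          (inv_nonneg.mpr Real.pi_pos.le)
    _ ≤ Real.pi⁻¹ * (Real.sqrt D2 * (2 * Real.pi * Real.sqrt (Real.log R))) := by
        apply mul_le_mul_of_nonneg_left
          (mul_le_mul_of_nonneg_left hsqrtP (Real.sqrt_nonneg _))
          (inv_nonneg.mpr Real.pi_pos.le)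
    _ = 2 * Real.sqrt D2 * Real.sqrt (Real.log R) := by
        have hpi := Real.pi_ne_zero
        field_simp
end
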